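/- Let σ be a finite Borel measure on ℝ and let p, h : ℝ → ℝ be continuous with p(x) = x·h(x) for all x. Set h_p(x) = (p(x)² + h(x)²)/(p(x)² + 1) and let σ^p be the pushforward under p of the measure h_p·σ. Let ρ be the measure with density x ↦ ((1+x²)/x²)·1_{x≠0}(x) with respect to σ, and let ρ' be the measure with density x ↦ ((1+x²)/x²)·1_{x≠0}(x) with respect to σ^p. Then ρ' coincides with the pushforward under p of the restriction of ρ to {x : p(x) ≠ 0}; that is, for every bounded Borel f : ℝ → ℝ, ∫_ℝ f dρ' = ∫_ℝ f(p(x))·1_{p(x)≠0}(x) dρ(x). -/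

import Mathlib

open MeasureTheory

lemma withDensity_map_aux {α β : Type*} [MeasurableSpace α] [MeasurableSpace β]
    (μ : Measure α) {f : α → β} (hf : Measurable f) {g : β → ENNReal} (hg : Measurable g) :
    (μ.map f).withDensity g = (μ.withDensity fun x => g (f x)).map f := by
  ext s hs
  rw [withDensity_apply _ hs, Measure.map_apply hf hs,
    withDensity_apply _ (hf hs), setLIntegral_map hs hg hf]

/-- Let `σ` be a finite Borel measure on `ℝ` and `p, h` continuous with `p(x) = x·h(x)`.
Let `h_p(x) = (p(x)² + h(x)²)/(p(x)² + 1)` and `σ^p` the pushforward under `p` of `h_p·σ`.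
Let `ρ` be the measure with density `x ↦ ((1+x²)/x²)·1_{x≠0}` with respect to `σ`, and
`ρ'` the measure with the same density with respect to `σ^p`. Then `ρ'` is the pushforward
under `p` of the restriction of `ρ` to `{x | p x ≠ 0}`. -/
theorem stmt12 (σ : Measure ℝ) [IsFiniteMeasure σ] (p h : ℝ → ℝ)
    (hp : Continuous p) (hh : Continuous h) (hph : ∀ x, p x = x * h x) :
    (Measure.map p
          (σ.withDensity fun x =>
            ENNReal.ofReal ((p x ^ 2 + h x ^ 2) / (p x ^ 2 + 1)))).withDensity
        (fun x => Set.indicator {y : ℝ | y ≠ 0}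
          (fun y => ENNReal.ofReal ((1 + y ^ 2) / y ^ 2)) x)
      = Measure.map p
          ((σ.withDensity fun x => Set.indicator {y : ℝ | y ≠ 0}
              (fun y => ENNReal.ofReal ((1 + y ^ 2) / y ^ 2)) x).restrict
            {x | p x ≠ 0}) := by
  set F : ℝ → ENNReal := fun y => Set.indicator {y : ℝ | y ≠ 0}
      (fun y => ENNReal.ofReal ((1 + y ^ 2) / y ^ 2)) y with hF
  set H : ℝ → ENNReal := fun x => ENNReal.ofReal ((p x ^ 2 + h x ^ 2) / (p x ^ 2 + 1)) with hH
  have hFm : Measurable F := by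
    apply Measurable.indicator
    · exact ((measurable_const.add (measurable_id.pow_const 2)).div
        (measurable_id.pow_const 2)).ennreal_ofReal
    · exact (measurableSet_singleton (0 : ℝ)).compl
  have hHm : Measurable H := by
    apply Measurable.ennreal_ofReal
    exact ((hp.pow 2).add (hh.pow 2)).measurable.div ((hp.pow 2).add continuous_const).measurable
  have hsm : MeasurableSet {x : ℝ | p x ≠ 0} :=
    (hp.measurable (measurableSet_singleton 0)).compl
  have hd : (H * F ∘ p) = {x : ℝ | p x ≠ 0}.indicator F := by
    funext x
    simp only [Pi.mul_apply, Function.comp_apply]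
    by_cases hx : p x = 0
    · have h1 : F 0 = 0 := by simp [hF]
      simp [Set.indicator_apply, hx, h1]
    · have hx0 : x ≠ 0 := by
        intro h0; apply hx; rw [hph, h0, zero_mul]
      have hh0 : h x ≠ 0 := by
        intro h0; apply hx; rw [hph, h0, mul_zero]
      have hFpx : F (p x) = ENNReal.ofReal ((1 + p x ^ 2) / p x ^ 2) := by
        simp [hF, Set.indicator_apply, hx]
      have hFx : F x = ENNReal.ofReal ((1 + x ^ 2) / x ^ 2) := by
        simp [hF, Set.indicator_apply, hx0]
      simp only [Set.indicator_apply, Set.mem_setOf_eq, hx, not_false_iff, if_pos,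
        hFpx, hFx, hH]
      simp only [ne_eq, hx, not_false_eq_true, if_true]
      rw [← ENNReal.ofReal_mul (by positivity)]
      rw [hph x]
      congr 1
      field_simp
      ring
  rw [withDensity_map_aux _ hp.measurable hFm,
    show (fun x => F (p x)) = F ∘ p from rfl,
    ← withDensity_mul _ hHm (hFm.comp hp.measurable),
    restrict_withDensity hsm, ← withDensity_indicator hsm, hd]
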